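/- For an n×n positive semidefinite Hermitian matrix P with diagonal entries d₁,...,dₙ and eigenvalues λ₁,...,λₙ, the vector of diagonal entries is majorized by the vector of eigenvalues. -/

import Mathlib

open Matrix Finset
open scoped Kronecker

/-- Sort a finite real vector in descending order. -/
noncomputable def dsort {d : ℕ} (v : Fin d → ℝ) : Fin d → ℝ :=
  fun i => v (Tuple.sort v i.rev)

/-- Battery capacity functional for descending-ordered vectors:
`cap λ ε = ∑ i, ε i * (λ i - λ (d-1-i))`. -/
noncomputable def cap {d : ℕ} (lam eps : Fin d → ℝ) : ℝ :=
  ∑ i, eps i * (lam i - lam i.rev)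

/-- Eigenvalues of a Hermitian matrix, in descending order. -/
noncomputable def eigsDesc {m : Type*} [Fintype m] [DecidableEq m] {A : Matrix m m ℂ}
    (hA : A.IsHermitian) : Fin (Fintype.card m) → ℝ :=
  dsort (hA.eigenvalues ∘ (Fintype.equivFin m).symm)

open scoped Classical in
/-- Quantum battery capacity `C(ρ; H)` (defaults to `0` on non-Hermitian inputs). -/
noncomputable def Cap {m : Type*} [Fintype m] [DecidableEq m] (ρ H : Matrix m m ℂ) : ℝ :=
  if hρ : ρ.IsHermitian then
    if hH : H.IsHermitian then cap (eigsDesc hρ) (eigsDesc hH) else 0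
  else 0

/-- Majorization `x ≺ y` of real vectors. -/
noncomputable def Maj {d : ℕ} (x y : Fin d → ℝ) : Prop :=
  (∀ k : ℕ, ∑ i : Fin d, (if (i : ℕ) < k then dsort x i else 0)
      ≤ ∑ i : Fin d, (if (i : ℕ) < k then dsort y i else 0)) ∧
  ∑ i, x i = ∑ i, y i

def σ1 : Matrix (Fin 2) (Fin 2) ℂ := !![0, 1; 1, 0]
def σ3 : Matrix (Fin 2) (Fin 2) ℂ := !![1, 0; 0, -1]

open scoped ComplexOrder

lemma dsort_antitone {d : ℕ} (v : Fin d → ℝ) : Antitone (dsort v) := by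
  intro i j hij
  exact Tuple.monotone_sort v (Fin.rev_le_rev.mpr hij)

lemma card_filter_lt (n k : ℕ) :
    (Finset.univ.filter (fun i : Fin n => (i : ℕ) < k)).card = min k n := by
  rcases le_or_gt n k with h | h
  · rw [min_eq_right h, Finset.filter_true_of_mem (fun i _ => lt_of_lt_of_le i.isLt h)]
    simp
  · rw [min_eq_left h.le]
    have : (Finset.univ.filter (fun i : Fin n => (i : ℕ) < k)) = Finset.Iio (⟨k, h⟩ : Fin n) := by
      ext i; simp [Finset.mem_Iio, Fin.lt_def]
    rw [this, Fin.card_Iio]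

lemma lemB {n : ℕ} (w c : Fin n → ℝ) (hw : Antitone w)
    (hc0 : ∀ i, 0 ≤ c i) (hc1 : ∀ i, c i ≤ 1) (m : ℕ) (hm : m ≤ n)
    (hsum : ∑ i, c i = m) :
    ∑ i, c i * w i ≤ ∑ i ∈ Finset.univ.filter (fun i : Fin n => (i : ℕ) < m), w i := by
  rcases Nat.eq_zero_or_pos n with h0 | h0
  · subst h0; simp
  set p : Fin n := ⟨min m (n - 1), by omega⟩ with hp
  have key : ∀ i : Fin n, c i * w i - (if (i : ℕ) < m then w i else 0)
      ≤ (c i - (if (i : ℕ) < m then 1 else 0)) * w p := by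
    intro i
    by_cases him : (i : ℕ) < m
    · simp only [if_pos him]
      have hip : i ≤ p := by
        rw [Fin.le_def]; simp only [hp]; have := i.isLt; omega
      have h1 : (c i - 1) * w i ≤ (c i - 1) * w p :=
        mul_le_mul_of_nonpos_left (hw hip) (by linarith [hc1 i])
      have h2 : c i * w i - w i = (c i - 1) * w i := by ring
      linarith
    · simp only [if_neg him]
      have hm' : m < n := lt_of_le_of_lt (le_of_not_gt him) i.isLt
      have hpi : p ≤ i := by
        rw [Fin.le_def]; simp only [hp]; omega
      have h1 := mul_le_mul_of_nonneg_left (hw hpi) (hc0 i)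
      linarith
  have hkey := Finset.sum_le_sum (fun i (_ : i ∈ Finset.univ) => key i)
  rw [Finset.sum_sub_distrib, ← Finset.sum_mul, Finset.sum_sub_distrib, hsum] at hkey
  have hcard : ∑ i : Fin n, (if (i : ℕ) < m then (1 : ℝ) else 0) = m := by
    rw [Finset.sum_boole, card_filter_lt]
    simp [min_eq_left hm]
  rw [hcard, sub_self, zero_mul] at hkey
  rw [Finset.sum_filter]
  linarith

theorem diag_majorized_by_eigenvalues (n : ℕ) (P : Matrix (Fin n) (Fin n) ℂ)
    (hP : P.PosSemidef) :
    Maj (fun i => (P i i).re) hP.isHermitian.eigenvalues := by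
  have hH : P.IsHermitian := hP.isHermitian
  set lam : Fin n → ℝ := hH.eigenvalues with hlam
  set U : Matrix (Fin n) (Fin n) ℂ := (hH.eigenvectorUnitary : Matrix (Fin n) (Fin n) ℂ) with hU
  set Q : Fin n → Fin n → ℝ := fun i j => Complex.normSq (U i j) with hQ
  set x : Fin n → ℝ := fun i => (P i i).re with hx
  -- diagonal entries as convex combinations of eigenvalues
  have hdiag : ∀ i, x i = ∑ j, Q i j * lam j := by
    intro i
    have hsp : P i i = ∑ j, (lam j : ℂ) * (Complex.normSq (U i j) : ℂ) := by
      conv_lhs => rw [hH.spectral_theorem, Unitary.conjStarAlgAut_apply]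
      rw [Matrix.mul_apply]
      refine Finset.sum_congr rfl fun j _ => ?_
      rw [Matrix.mul_diagonal, Matrix.star_apply, Complex.star_def]
      simp only [Function.comp_apply]
      rw [mul_right_comm, Complex.mul_conj, mul_comm, hU]
      norm_num
      exact Or.inl rfl
    have h := congrArg Complex.re hsp
    rw [Complex.re_sum] at h
    rw [hx]
    simp only
    rw [h]
    refine Finset.sum_congr rfl fun j _ => ?_
    simp [mul_comm]
    exact Or.inl rfl
  have hQ0 : ∀ i j, 0 ≤ Q i j := fun i j => Complex.normSq_nonneg _
  have hcol : ∀ j, ∑ i, Q i j = 1 := by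
    intro j
    have h := mem_unitaryGroup_iff'.mp hH.eigenvectorUnitary.2
    have h2 : (star U * U) j j = (1 : Matrix (Fin n) (Fin n) ℂ) j j := by rw [hU, h]
    rw [Matrix.mul_apply, Matrix.one_apply_eq] at h2
    have h3 : ∑ i, (Q i j : ℂ) = 1 := by
      rw [← h2]
      refine Finset.sum_congr rfl fun i _ => ?_
      rw [Matrix.star_apply, Complex.star_def, ← Complex.normSq_eq_conj_mul_self]
    have := congrArg Complex.re h3
    simpa using this
  have hrow : ∀ i, ∑ j, Q i j = 1 := by
    intro i
    have h := mem_unitaryGroup_iff.mp hH.eigenvectorUnitary.2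
    have h2 : (U * star U) i i = (1 : Matrix (Fin n) (Fin n) ℂ) i i := by rw [hU, h]
    rw [Matrix.mul_apply, Matrix.one_apply_eq] at h2
    have h3 : ∑ j, (Q i j : ℂ) = 1 := by
      rw [← h2]
      refine Finset.sum_congr rfl fun j _ => ?_
      rw [Matrix.star_apply, Complex.star_def, ← Complex.mul_conj]
    have := congrArg Complex.re h3
    push_cast at this
    simpa using this
  constructor
  · -- partial sums
    intro k
    set m : ℕ := min k n with hmdef
    have hinj : Function.Injective (fun i : Fin n => Tuple.sort x i.rev) :=
      (Tuple.sort x).injective.comp Fin.rev_injective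
    set S : Finset (Fin n) :=
      (Finset.univ.filter (fun i : Fin n => (i : ℕ) < k)).image (fun i => Tuple.sort x i.rev)
      with hS
    have hScard : S.card = m := by
      rw [hS, Finset.card_image_of_injective _ hinj, card_filter_lt]
    -- LHS equals sum over S
    have hL : ∑ i : Fin n, (if (i : ℕ) < k then dsort x i else 0) = ∑ j ∈ S, x j := by
      rw [← Finset.sum_filter, hS,
        Finset.sum_image (fun a _ b _ h => hinj h)]
      rfl
    -- coefficients
    set c : Fin n → ℝ := fun l => ∑ j ∈ S, Q j l with hc
    have hc0 : ∀ l, 0 ≤ c l := fun l => Finset.sum_nonneg fun j _ => hQ0 j l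
    have hc1 : ∀ l, c l ≤ 1 := by
      intro l
      calc c l ≤ ∑ j : Fin n, Q j l :=
            Finset.sum_le_sum_of_subset_of_nonneg (Finset.subset_univ S)
              (fun j _ _ => hQ0 j l)
        _ = 1 := hcol l
    have hcsum : ∑ l, c l = m := by
      rw [hc]
      rw [Finset.sum_comm]
      rw [Finset.sum_congr rfl fun j _ => hrow j]
      simp [hScard]
    have hxc : ∑ j ∈ S, x j = ∑ l, c l * lam l := by
      rw [Finset.sum_congr rfl fun j _ => hdiag j, Finset.sum_comm]
      exact Finset.sum_congr rfl fun l _ => (Finset.sum_mul ..).symm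
    -- reindex through the sorting permutation of lam
    set π : Equiv.Perm (Fin n) := Fin.revPerm.trans (Tuple.sort lam) with hπ
    have hw : ∀ i, dsort lam i = lam (π i) := fun i => rfl
    have hreidx : ∑ l, c l * lam l = ∑ i, (c ∘ π) i * dsort lam i := by
      rw [← Equiv.sum_comp π (fun l => c l * lam l)]
      rfl
    have hcsum' : ∑ i, (c ∘ π) i = m := by
      rw [← hcsum, ← Equiv.sum_comp π c]
      rfl
    have hB := lemB (dsort lam) (c ∘ π) (dsort_antitone lam)
      (fun i => hc0 _) (fun i => hc1 _) m (min_le_right k n) hcsum'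
    -- RHS
    have hR : ∑ i : Fin n, (if (i : ℕ) < k then dsort lam i else 0)
        = ∑ i ∈ Finset.univ.filter (fun i : Fin n => (i : ℕ) < m), dsort lam i := by
      rw [← Finset.sum_filter]
      congr 1
      ext i
      simp only [Finset.mem_filter, Finset.mem_univ, true_and, hmdef]
      have := i.isLt
      omega
    rw [hL, hR, hxc, hreidx]
    exact hB
  · -- total sums
    rw [Finset.sum_congr rfl fun i _ => hdiag i, Finset.sum_comm]
    refine Finset.sum_congr rfl fun j _ => ?_
    rw [← Finset.sum_mul, hcol j, one_mul]
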